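/- arXiv:1610.05159 — 3 statements merged into one kernel-verified Lean document; each statement's English description precedes it below -/
import Mathlib

section
/- Let n be a positive integer, Γ a group, and ρ : Γ → SL_n(ℂ) an irreducible representation such that tr(ρ(g)) = conj(tr(ρ(g⁻¹))) for all g ∈ Γ. Then there exist natural numbers p, q with p + q = n and an invertible matrix Q ∈ GL_n(ℂ) such that for all g ∈ Γ, the matrix ρ'(g) = Q ρ(g) Q⁻¹ satisfies ρ'(g)ᴴ I_{p,q} ρ'(g) = I_{p,q}; that is, ρ is conjugate to a representation taking values in SU(p,q). -/
open Matrix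

/-- A representation `ρ : Γ →* SL_n(ℂ)` is irreducible if the only invariant subspaces
of `ℂⁿ` are `0` and `ℂⁿ`. -/
def IsIrreducibleRep {n : ℕ} {Γ : Type*} [Group Γ]
    (ρ : Γ →* Matrix.SpecialLinearGroup (Fin n) ℂ) : Prop :=
  ∀ W : Submodule ℂ (Fin n → ℂ),
    (∀ g : Γ, ∀ x ∈ W, (ρ g : Matrix (Fin n) (Fin n) ℂ).mulVec x ∈ W) → W = ⊥ ∨ W = ⊤

/-- The matrix `I_{p,q}`, diagonal with `p` entries `1` followed by `q` entries `-1`. -/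
def Ipq (n p : ℕ) : Matrix (Fin n) (Fin n) ℂ :=
  Matrix.diagonal (fun i => if (i : ℕ) < p then 1 else -1)

open Module LinearMap Pointwise

lemma aux_burnside {n : ℕ} (hn : 0 < n) (A : Subalgebra ℂ (Module.End ℂ (Fin n → ℂ)))
    (hirr : ∀ W : Submodule ℂ (Fin n → ℂ), (∀ a ∈ A, ∀ x ∈ W, a x ∈ W) → W = ⊥ ∨ W = ⊤) :
    A = ⊤ := by
  classical
  haveI : NeZero n := ⟨hn.ne'⟩
  -- orbit lemma
  have horbit : ∀ v : Fin n → ℂ, v ≠ 0 → ∀ u : Fin n → ℂ, ∃ a ∈ A, a v = u := by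
    intro v hv u
    let W : Submodule ℂ (Fin n → ℂ) :=
      { carrier := {w | ∃ a ∈ A, a v = w}
        add_mem' := by
          rintro _ _ ⟨a, ha, rfl⟩ ⟨b, hb, rfl⟩
          exact ⟨a + b, A.add_mem ha hb, rfl⟩
        zero_mem' := ⟨0, A.zero_mem, rfl⟩
        smul_mem' := by
          rintro c _ ⟨a, ha, rfl⟩
          exact ⟨c • a, A.smul_mem ha c, rfl⟩ }
    have hWinv : ∀ a ∈ A, ∀ x ∈ W, a x ∈ W := by
      rintro a ha x ⟨b, hb, rfl⟩
      exact ⟨a * b, A.mul_mem ha hb, rfl⟩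
    have hvW : v ∈ W := ⟨1, A.one_mem, rfl⟩
    rcases hirr W hWinv with h | h
    · rw [h] at hvW; exact absurd (Submodule.mem_bot ℂ |>.mp hvW) hv
    · have : u ∈ W := by rw [h]; trivial
      exact this
  have hone : (1 : Module.End ℂ (Fin n → ℂ)) ≠ 0 := by
    intro h
    have : (Pi.single (⟨0, hn⟩ : Fin n) (1:ℂ)) = (0 : Fin n → ℂ) := by
      have := congrArg (fun f : Module.End ℂ (Fin n → ℂ) => f (Pi.single ⟨0, hn⟩ 1)) h
      simpa using this
    simpa using congrFun this ⟨0, hn⟩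
  -- minimal rank nonzero element
  let Pset : Set ℕ := {r | ∃ T : Module.End ℂ (Fin n → ℂ),
    T ∈ A ∧ T ≠ 0 ∧ Module.finrank ℂ (LinearMap.range T) = r}
  have hPne : Pset.Nonempty := ⟨_, 1, A.one_mem, hone, rfl⟩
  obtain ⟨T, hTA, hT0, hTr⟩ := Nat.sInf_mem hPne
  have hmin : ∀ r ∈ Pset, sInf Pset ≤ r := fun r hr => Nat.sInf_le hr
  obtain ⟨x, hx⟩ : ∃ x, T x ≠ 0 := by
    by_contra h
    push_neg at h
    exact hT0 (LinearMap.ext h)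
  set v := T x with hv
  have hvne : v ≠ 0 := hx
  -- rank one
  have hrank1 : Module.finrank ℂ (LinearMap.range T) = 1 := by
    rcases Nat.lt_or_ge (sInf Pset) 2 with h2 | h2
    · have hne0 : Module.finrank ℂ (LinearMap.range T) ≠ 0 := by
        intro h
        rw [Submodule.finrank_eq_zero] at h
        exact hT0 (LinearMap.range_eq_bot.mp h)
      omega
    · exfalso
      have hnotle : ¬ (LinearMap.range T ≤ Submodule.span ℂ {v}) := by
        intro hle
        have h1 : Module.finrank ℂ (LinearMap.range T) ≤
            Module.finrank ℂ (Submodule.span ℂ {v}) := Submodule.finrank_mono hle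
        rw [finrank_span_singleton hvne, hTr] at h1
        omega
      obtain ⟨z', hz'r, hz's⟩ := Set.not_subset.mp fun h => hnotle h
      obtain ⟨z, rfl⟩ := hz'r
      obtain ⟨S, hSA, hSv⟩ := horbit v hvne z
      set RT := LinearMap.range T with hRT
      have hmaps : ∀ w ∈ RT, (T * S) w ∈ RT := fun w _ => ⟨S w, rfl⟩
      let f : Module.End ℂ RT := (T * S).restrict hmaps
      haveI : Nontrivial RT :=
        Submodule.nontrivial_iff_ne_bot.mpr (fun h => hT0 (LinearMap.range_eq_bot.mp h))
      obtain ⟨μ, hμ⟩ := Module.End.exists_eigenvalue f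
      obtain ⟨w0, hw0⟩ := hμ.exists_hasEigenvector
      set R := T * S * T - μ • T with hR
      have hRA : R ∈ A :=
        A.sub_mem (A.mul_mem (A.mul_mem hTA hSA) hTA) (A.smul_mem hTA μ)
      have hfact : ∀ y, R y = RT.subtype ((f - μ • 1) (T.rangeRestrict y)) := by
        intro y
        simp only [LinearMap.sub_apply, LinearMap.smul_apply, Module.End.one_apply,
          Submodule.coe_subtype, AddSubgroupClass.coe_sub, SetLike.val_smul]
        have : (f (T.rangeRestrict y) : Fin n → ℂ) = (T * S * T) y := by
          simp [f, LinearMap.restrict_apply, Module.End.mul_apply]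
        rw [this]
        simp [hR, Module.End.mul_apply]
      have hRle : LinearMap.range R ≤
          Submodule.map RT.subtype (LinearMap.range (f - μ • 1)) := by
        rintro _ ⟨y, rfl⟩
        exact ⟨(f - μ • 1) (T.rangeRestrict y), ⟨_, rfl⟩, (hfact y).symm⟩
      have hker : LinearMap.ker (f - μ • 1) ≠ ⊥ := by
        intro h
        have h0 : (f - μ • 1) w0 = 0 := by
          have := hw0.apply_eq_smul
          simp [LinearMap.sub_apply, this]
        rw [LinearMap.ker_eq_bot] at h
        exact hw0.2 (h (h0.trans (map_zero _).symm))
      have hlt : Module.finrank ℂ (LinearMap.range R) < sInf Pset := by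
        have h1 : Module.finrank ℂ (LinearMap.range (f - μ • 1)) +
            Module.finrank ℂ (LinearMap.ker (f - μ • 1)) = Module.finrank ℂ RT :=
          LinearMap.finrank_range_add_finrank_ker _
        have h2 : 0 < Module.finrank ℂ (LinearMap.ker (f - μ • 1)) := by
          rcases Nat.eq_zero_or_pos (Module.finrank ℂ (LinearMap.ker (f - μ • 1))) with h | h
          · exact absurd (Submodule.finrank_eq_zero.mp h) hker
          · exact h
        have h3 : Module.finrank ℂ (LinearMap.range R) ≤
            Module.finrank ℂ (Submodule.map RT.subtype (LinearMap.range (f - μ • 1))) :=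
          Submodule.finrank_mono hRle
        have h4 : Module.finrank ℂ (Submodule.map RT.subtype (LinearMap.range (f - μ • 1))) ≤
            Module.finrank ℂ (LinearMap.range (f - μ • 1)) := Submodule.finrank_map_le _ _
        have h5 : Module.finrank ℂ RT = sInf Pset := hTr
        omega
      have hR0 : R = 0 := by
        by_contra hRne
        exact absurd (hmin _ ⟨R, hRA, hRne, rfl⟩) (Nat.not_le.mpr hlt)
      have hRx : R x = T z - μ • v := by
        simp [hR, Module.End.mul_apply, LinearMap.sub_apply, ← hv, hSv]
      have hne : T z - μ • v ≠ 0 := by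
        intro h
        rw [sub_eq_zero] at h
        exact hz's (h ▸ Submodule.smul_mem _ μ (Submodule.mem_span_singleton_self v))
      rw [hR0] at hRx
      simp only [LinearMap.zero_apply] at hRx
      exact hne hRx.symm
  -- rank one decomposition
  have hrange : LinearMap.range T = Submodule.span ℂ {v} := by
    symm
    apply Submodule.eq_of_le_of_finrank_le
    · rw [Submodule.span_le, Set.singleton_subset_iff]
      exact ⟨x, rfl⟩
    · rw [hrank1, finrank_span_singleton hvne]
  obtain ⟨φ0, hφ0⟩ : ∃ φ0 : (Fin n → ℂ) →ₗ[ℂ] ℂ, φ0 v = 1 := by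
    obtain ⟨g, hg⟩ := (LinearMap.toSpanSingleton ℂ (Fin n → ℂ) v).exists_leftInverse_of_injective
      (LinearMap.ker_toSpanSingleton ℂ hvne)
    refine ⟨g, ?_⟩
    have := LinearMap.congr_fun hg 1
    simpa [LinearMap.toSpanSingleton_apply] using this
  set φ : (Fin n → ℂ) →ₗ[ℂ] ℂ := φ0 ∘ₗ T with hφ
  have hTdec : ∀ y, T y = φ y • v := by
    intro y
    obtain ⟨c, hc⟩ := Submodule.mem_span_singleton.mp (hrange ▸ LinearMap.mem_range_self T y)
    have hφy : φ y = c := by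
      rw [hφ]
      simp only [LinearMap.comp_apply]
      rw [← hc, _root_.map_smul, hφ0, smul_eq_mul, mul_one]
    rw [hφy]
    exact hc.symm
  have hφx : φ x = 1 := by
    rw [hφ]
    simp only [LinearMap.comp_apply]
    rw [← hv, hφ0]
  have hfun : ∀ ψ : (Fin n → ℂ) →ₗ[ℂ] ℂ, ∃ b ∈ A, ψ = φ ∘ₗ b := by
    let U : Submodule ℂ (Module.Dual ℂ (Fin n → ℂ)) :=
      { carrier := {ψ | ∃ b ∈ A, ψ = φ ∘ₗ b}
        add_mem' := by
          rintro _ _ ⟨a, ha, rfl⟩ ⟨b, hb, rfl⟩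
          exact ⟨a + b, A.add_mem ha hb, by ext y; simp⟩
        zero_mem' := ⟨0, A.zero_mem, by ext y; simp⟩
        smul_mem' := by
          rintro c _ ⟨a, ha, rfl⟩
          exact ⟨c • a, A.smul_mem ha c, by ext y; simp⟩ }
    have hUc : U.dualCoannihilator = ⊥ := by
      rw [eq_bot_iff]
      intro y hy
      rw [Submodule.mem_dualCoannihilator] at hy
      let W : Submodule ℂ (Fin n → ℂ) :=
        { carrier := {w | ∀ b ∈ A, φ (b w) = 0}
          add_mem' := fun hw hw' b hb => by simp [map_add, hw b hb, hw' b hb]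
          zero_mem' := fun b hb => by simp
          smul_mem' := fun c w hw b hb => by simp [_root_.map_smul, hw b hb] }
      have hWinv : ∀ a ∈ A, ∀ w ∈ W, a w ∈ W := by
        intro a ha w hw b hb
        have := hw (b * a) (A.mul_mem hb ha)
        simpa [Module.End.mul_apply] using this
      have hWne : W ≠ ⊤ := by
        intro h
        have hxW : x ∈ W := h ▸ trivial
        have := hxW 1 A.one_mem
        rw [Module.End.one_apply, hφx] at this
        exact one_ne_zero this
      have hWbot : W = ⊥ := (hirr W hWinv).resolve_right hWne
      have hyW : y ∈ W := fun b hb => hy (φ ∘ₗ b) ⟨b, hb, rfl⟩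
      rw [hWbot] at hyW
      simpa using hyW
    have hU : U = ⊤ := by
      apply Submodule.eq_top_of_finrank_eq
      have h1 := Subspace.finrank_add_finrank_dualCoannihilator_eq U
      rw [hUc, finrank_bot] at h1
      rw [Subspace.dual_finrank_eq]
      omega
    intro ψ
    have hmem : ψ ∈ U := hU ▸ trivial
    exact hmem
  have hrankone : ∀ (u : Fin n → ℂ) (ψ : (Fin n → ℂ) →ₗ[ℂ] ℂ), ψ.smulRight u ∈ A := by
    intro u ψ
    obtain ⟨b, hb, rfl⟩ := hfun ψ
    obtain ⟨a, ha, hav⟩ := horbit v hvne u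
    have heq : (φ ∘ₗ b).smulRight u = a * T * b := by
      refine LinearMap.ext fun y => ?_
      simp only [LinearMap.smulRight_apply, LinearMap.comp_apply, Module.End.mul_apply]
      rw [hTdec (b y), _root_.map_smul, hav]
    rw [heq]
    exact A.mul_mem (A.mul_mem ha hTA) hb
  rw [eq_top_iff]
  rintro f -
  have hf : f = ∑ i : Fin n,
      (LinearMap.proj i : (Fin n → ℂ) →ₗ[ℂ] ℂ).smulRight (f (Pi.single i 1)) := by
    apply LinearMap.ext
    intro y
    rw [LinearMap.sum_apply]
    calc f y = f (∑ i, Pi.single i (y i)) := by rw [Finset.univ_sum_single]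
    _ = ∑ i, f (Pi.single i (y i)) := map_sum f _ _
    _ = ∑ i, (LinearMap.proj i : (Fin n → ℂ) →ₗ[ℂ] ℂ).smulRight (f (Pi.single i 1)) y := by
        refine Finset.sum_congr rfl fun i _ => ?_
        rw [LinearMap.smulRight_apply, LinearMap.proj_apply, ← _root_.map_smul]
        congr 1
        ext j
        simp only [Pi.smul_apply, Pi.single_apply, smul_eq_mul]
        split <;> simp
  rw [hf]
  exact A.sum_mem (fun i _ => hrankone _ _)

lemma aux_span_top {n : ℕ} (hn : 0 < n) {Γ : Type*} [Group Γ]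
    (ρ : Γ →* Matrix.SpecialLinearGroup (Fin n) ℂ)
    (hirr : IsIrreducibleRep ρ) :
    Submodule.span ℂ (Set.range (fun g : Γ => ((ρ g : Matrix (Fin n) (Fin n) ℂ)))) = ⊤ := by
  classical
  let π : Γ →* Module.End ℂ (Fin n → ℂ) :=
    { toFun := fun g => Matrix.mulVecLin (ρ g : Matrix (Fin n) (Fin n) ℂ)
      map_one' := by simp; rfl
      map_mul' := by
        intro g h
        show (ρ (g*h) : Matrix (Fin n) (Fin n) ℂ).mulVecLin = _
        have : (ρ (g*h) : Matrix (Fin n) (Fin n) ℂ) = (ρ g : Matrix (Fin n) (Fin n) ℂ) * (ρ h : Matrix (Fin n) (Fin n) ℂ) := by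
          rw [_root_.map_mul]; rfl
        rw [this, Matrix.mulVecLin_mul]
        rfl }
  have hadj : Algebra.adjoin ℂ (Set.range ⇑π) = ⊤ := by
    apply aux_burnside hn
    intro W hW
    refine hirr W fun g x hx => ?_
    have := hW (π g) (Algebra.subset_adjoin ⟨g, rfl⟩) x hx
    simpa [π, Matrix.mulVecLin_apply] using this
  have hclos : ((Submonoid.closure (Set.range ⇑π) : Submonoid _) : Set _) = Set.range ⇑π := by
    apply Set.Subset.antisymm
    · have hle : Submonoid.closure (Set.range ⇑π) ≤ MonoidHom.mrange π :=
        Submonoid.closure_le.mpr (by rintro _ ⟨g, rfl⟩; exact ⟨g, rfl⟩)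
      intro a ha
      obtain ⟨g, rfl⟩ := hle ha
      exact ⟨g, rfl⟩
    · exact Submonoid.subset_closure
  have hspanE : Submodule.span ℂ (Set.range ⇑π) = ⊤ := by
    have h := Algebra.adjoin_eq_span (R := ℂ) (s := Set.range ⇑π)
    rw [hadj, hclos] at h
    rw [← h]
    rfl
  rw [eq_top_iff]
  rintro X -
  have hX : (Matrix.toLin' X) ∈ Submodule.map
      (Matrix.toLin' : Matrix (Fin n) (Fin n) ℂ ≃ₗ[ℂ] _).toLinearMap
      (Submodule.span ℂ (Set.range fun g : Γ => ((ρ g : Matrix (Fin n) (Fin n) ℂ)))) := by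
    rw [Submodule.map_span]
    have himg : (Matrix.toLin' : Matrix (Fin n) (Fin n) ℂ ≃ₗ[ℂ] _).toLinearMap ''
        (Set.range fun g : Γ => ((ρ g : Matrix (Fin n) (Fin n) ℂ))) = Set.range ⇑π := by
      ext a
      constructor
      · rintro ⟨_, ⟨g, rfl⟩, rfl⟩
        exact ⟨g, by rfl⟩
      · rintro ⟨g, rfl⟩
        exact ⟨_, ⟨g, rfl⟩, by rfl⟩
    rw [himg, hspanE]
    trivial
  obtain ⟨Y, hY, hXY⟩ := hX
  have : Y = X := Matrix.toLin'.injective hXY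
  exact this ▸ hY

set_option maxHeartbeats 1000000 in
lemma aux_exists_H {n : ℕ} (hn : 0 < n) {Γ : Type*} [Group Γ]
    (ρ : Γ →* Matrix.SpecialLinearGroup (Fin n) ℂ)
    (hirr : IsIrreducibleRep ρ)
    (htr : ∀ g : Γ, (ρ g : Matrix (Fin n) (Fin n) ℂ).trace =
      starRingEnd ℂ ((ρ g⁻¹ : Matrix.SpecialLinearGroup (Fin n) ℂ) :
        Matrix (Fin n) (Fin n) ℂ).trace) :
    ∃ H : Matrix (Fin n) (Fin n) ℂ, H.IsHermitian ∧ IsUnit H ∧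
      ∀ g : Γ, (ρ g : Matrix (Fin n) (Fin n) ℂ)ᴴ * H * (ρ g : Matrix (Fin n) (Fin n) ℂ) = H := by
  classical
  haveI : NeZero n := ⟨hn.ne'⟩
  have hcoe_mul : ∀ g h : Γ, (ρ (g*h) : Matrix (Fin n) (Fin n) ℂ)
      = (ρ g : Matrix (Fin n) (Fin n) ℂ) * (ρ h : Matrix (Fin n) (Fin n) ℂ) := fun g h => by
    rw [_root_.map_mul]; rfl
  have hcoe_one : (ρ 1 : Matrix (Fin n) (Fin n) ℂ) = 1 := by rw [_root_.map_one]; rfl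
  set σ : Γ → Matrix (Fin n) (Fin n) ℂ := fun g => (ρ g⁻¹ : Matrix (Fin n) (Fin n) ℂ)ᴴ with hσ
  have hσ_mul : ∀ g h, σ (g * h) = σ g * σ h := by
    intro g h
    show (ρ (g*h)⁻¹ : Matrix (Fin n) (Fin n) ℂ)ᴴ = _
    rw [_root_.mul_inv_rev, hcoe_mul, conjTranspose_mul]
  have hσ_one : σ 1 = 1 := by
    show (ρ (1:Γ)⁻¹ : Matrix (Fin n) (Fin n) ℂ)ᴴ = 1
    rw [inv_one, hcoe_one, conjTranspose_one]
  have htrσ : ∀ g, (σ g).trace = (ρ g : Matrix (Fin n) (Fin n) ℂ).trace := by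
    intro g
    show ((ρ g⁻¹ : Matrix (Fin n) (Fin n) ℂ)ᴴ).trace = _
    rw [trace_conjTranspose, ← starRingEnd_apply]
    exact (htr g).symm
  set τ : Γ → (Matrix (Fin n) (Fin n) ℂ) × (Matrix (Fin n) (Fin n) ℂ) :=
    fun g => ((ρ g : Matrix (Fin n) (Fin n) ℂ), σ g) with hτ
  set G : Submodule ℂ ((Matrix (Fin n) (Fin n) ℂ) × (Matrix (Fin n) (Fin n) ℂ)) :=
    Submodule.span ℂ (Set.range τ) with hG
  have hτ_mul : ∀ g h, τ g * τ h = τ (g * h) := by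
    intro g h
    refine Prod.ext ?_ ?_
    · exact (hcoe_mul g h).symm
    · exact (hσ_mul g h).symm
  have hGmul : ∀ u ∈ G, ∀ w ∈ G, u * w ∈ G := by
    intro u hu w hw
    have h1 : (Set.range τ) * (Set.range τ) ⊆ Set.range τ := by
      rintro _ ⟨_, ⟨g, rfl⟩, _, ⟨h, rfl⟩, rfl⟩
      exact ⟨g * h, (hτ_mul g h).symm⟩
    have h2 := Submodule.mul_mem_mul hu hw
    rw [hG, Submodule.span_mul_span] at h2
    exact Submodule.span_mono h1 h2
  -- trace functional vanishes on G
  have hGtr : ∀ h : Γ, ∀ u ∈ G, ((ρ h : Matrix (Fin n) (Fin n) ℂ) * u.1).trace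
      = (σ h * u.2).trace := by
    intro h u hu
    set F : ((Matrix (Fin n) (Fin n) ℂ) × (Matrix (Fin n) (Fin n) ℂ)) →ₗ[ℂ] ℂ :=
      ((Matrix.traceLinearMap (Fin n) ℂ ℂ).comp
        ((LinearMap.mulLeft ℂ (ρ h : Matrix (Fin n) (Fin n) ℂ)).comp
          (LinearMap.fst ℂ _ _))) -
      ((Matrix.traceLinearMap (Fin n) ℂ ℂ).comp
        ((LinearMap.mulLeft ℂ (σ h)).comp (LinearMap.snd ℂ _ _))) with hF
    have hle : G ≤ LinearMap.ker F := by
      rw [hG, Submodule.span_le]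
      rintro _ ⟨g, rfl⟩
      simp only [SetLike.mem_coe, LinearMap.mem_ker, hF, LinearMap.sub_apply,
        LinearMap.comp_apply, LinearMap.fst_apply, LinearMap.snd_apply,
        LinearMap.mulLeft_apply, Matrix.traceLinearMap_apply]
      rw [sub_eq_zero, ← hcoe_mul, ← hσ_mul, htrσ]
    have := hle hu
    rw [LinearMap.mem_ker, hF] at this
    simp only [LinearMap.sub_apply, LinearMap.comp_apply, LinearMap.fst_apply,
      LinearMap.snd_apply, LinearMap.mulLeft_apply, Matrix.traceLinearMap_apply] at this
    exact sub_eq_zero.mp this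
  -- σ spans everything
  have hσspan : Submodule.span ℂ (Set.range σ) = ⊤ := by
    rw [eq_top_iff]
    rintro X -
    have hXH : Xᴴ ∈ Submodule.span ℂ
        (Set.range (fun g : Γ => ((ρ g : Matrix (Fin n) (Fin n) ℂ)))) := by
      rw [aux_span_top hn ρ hirr]; trivial
    have hstep : ∀ (Z : Matrix (Fin n) (Fin n) ℂ),
        Z ∈ Submodule.span ℂ (Set.range (fun g : Γ => ((ρ g : Matrix (Fin n) (Fin n) ℂ)))) →
        Zᴴ ∈ Submodule.span ℂ (Set.range σ) := by
      intro Z hZ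
      induction hZ using Submodule.span_induction with
      | mem x hx =>
        obtain ⟨g, rfl⟩ := hx
        apply Submodule.subset_span
        refine ⟨g⁻¹, ?_⟩
        show (ρ g⁻¹⁻¹ : Matrix (Fin n) (Fin n) ℂ)ᴴ = _
        rw [inv_inv]
      | zero => simpa using Submodule.zero_mem _
      | add x y hx hy ihx ihy => rw [conjTranspose_add]; exact Submodule.add_mem _ ihx ihy
      | smul a x hx ih => rw [conjTranspose_smul]; exact Submodule.smul_mem _ _ ih
    have := hstep _ hXH
    rwa [conjTranspose_conjTranspose] at this
  have hnondeg : ∀ Y : Matrix (Fin n) (Fin n) ℂ, (∀ Z, (Z * Y).trace = 0) → Y = 0 := by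
    intro Y hY
    ext i j
    have htr1 : (Matrix.single j i (1:ℂ) * Y).trace = Y i j := by
      simp [Matrix.trace, Matrix.diag, Matrix.mul_apply, Matrix.single, ite_and]
    have := hY (Matrix.single j i 1)
    rw [htr1] at this
    simpa using this
  have hzero : ∀ Y : Matrix (Fin n) (Fin n) ℂ,
      ((0 : Matrix (Fin n) (Fin n) ℂ), Y) ∈ G → Y = 0 := by
    intro Y hY
    apply hnondeg
    intro Z
    have hker : Submodule.span ℂ (Set.range σ) ≤ LinearMap.ker
        ((Matrix.traceLinearMap (Fin n) ℂ ℂ).comp (LinearMap.mulRight ℂ Y)) := by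
      rw [Submodule.span_le]
      rintro _ ⟨h, rfl⟩
      simp only [SetLike.mem_coe, LinearMap.mem_ker, LinearMap.comp_apply,
        LinearMap.mulRight_apply, Matrix.traceLinearMap_apply]
      have := hGtr h _ hY
      simpa using this.symm
    have hZ : Z ∈ Submodule.span ℂ (Set.range σ) := by rw [hσspan]; trivial
    have := hker hZ
    simpa using this
  -- the graph is the graph of a linear map
  set pr1 : G →ₗ[ℂ] Matrix (Fin n) (Fin n) ℂ := (LinearMap.fst ℂ _ _).comp G.subtype with hpr1
  have hbij : Function.Bijective pr1 := by
    constructor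
    · intro u v huv
      have hd : ((u : Matrix (Fin n) (Fin n) ℂ × Matrix (Fin n) (Fin n) ℂ) - (v : Matrix (Fin n) (Fin n) ℂ × Matrix (Fin n) (Fin n) ℂ)) ∈ G := Submodule.sub_mem _ u.2 v.2
      have h1 : ((u : Matrix (Fin n) (Fin n) ℂ × Matrix (Fin n) (Fin n) ℂ) - (v : Matrix (Fin n) (Fin n) ℂ × Matrix (Fin n) (Fin n) ℂ)).1 = 0 := sub_eq_zero.mpr huv
      have h2 : ((u : Matrix (Fin n) (Fin n) ℂ × Matrix (Fin n) (Fin n) ℂ) - (v : Matrix (Fin n) (Fin n) ℂ × Matrix (Fin n) (Fin n) ℂ)).2 = 0 := by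
        apply hzero
        have heq : ((u : Matrix (Fin n) (Fin n) ℂ × Matrix (Fin n) (Fin n) ℂ) - (v : Matrix (Fin n) (Fin n) ℂ × Matrix (Fin n) (Fin n) ℂ)) = (0, ((u : Matrix (Fin n) (Fin n) ℂ × Matrix (Fin n) (Fin n) ℂ) - (v : Matrix (Fin n) (Fin n) ℂ × Matrix (Fin n) (Fin n) ℂ)).2) :=
          Prod.ext h1 rfl
        rw [← heq]
        exact hd
      apply Subtype.ext
      have : ((u : Matrix (Fin n) (Fin n) ℂ × Matrix (Fin n) (Fin n) ℂ) - (v : Matrix (Fin n) (Fin n) ℂ × Matrix (Fin n) (Fin n) ℂ)) = 0 := by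
        rw [Prod.ext_iff]; exact ⟨h1, h2⟩
      exact sub_eq_zero.mp this
    · intro X
      have hX : X ∈ Submodule.map (LinearMap.fst ℂ _ _) G := by
        rw [hG, Submodule.map_span]
        have himg : (LinearMap.fst ℂ (Matrix (Fin n) (Fin n) ℂ) (Matrix (Fin n) (Fin n) ℂ)) ''
            Set.range τ = Set.range (fun g : Γ => ((ρ g : Matrix (Fin n) (Fin n) ℂ))) := by
          ext a
          constructor
          · rintro ⟨_, ⟨g, rfl⟩, rfl⟩; exact ⟨g, rfl⟩
          · rintro ⟨g, rfl⟩; exact ⟨τ g, ⟨g, rfl⟩, rfl⟩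
        rw [himg, aux_span_top hn ρ hirr]
        trivial
      obtain ⟨u, hu, hux⟩ := hX
      exact ⟨⟨u, hu⟩, hux⟩
  set e : G ≃ₗ[ℂ] Matrix (Fin n) (Fin n) ℂ := LinearEquiv.ofBijective pr1 hbij with he
  set φm : Matrix (Fin n) (Fin n) ℂ →ₗ[ℂ] Matrix (Fin n) (Fin n) ℂ :=
    ((LinearMap.snd ℂ _ _).comp G.subtype).comp e.symm.toLinearMap with hφm
  have hφmem : ∀ X : Matrix (Fin n) (Fin n) ℂ, (X, φm X) ∈ G := by
    intro X
    have h1 : ((e.symm X : G) : Matrix (Fin n) (Fin n) ℂ × Matrix (Fin n) (Fin n) ℂ).1 = X := e.apply_symm_apply X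
    have h2 : ((e.symm X : G) : Matrix (Fin n) (Fin n) ℂ × Matrix (Fin n) (Fin n) ℂ) = (X, φm X) := Prod.ext h1 rfl
    rw [← h2]
    exact (e.symm X).2
  have hφuniq : ∀ X Y, (X, Y) ∈ G → Y = φm X := by
    intro X Y hXY
    have hd : (((X, Y) : Matrix (Fin n) (Fin n) ℂ × Matrix (Fin n) (Fin n) ℂ) - ((X, φm X) : Matrix (Fin n) (Fin n) ℂ × Matrix (Fin n) (Fin n) ℂ)) ∈ G :=
      Submodule.sub_mem _ hXY (hφmem X)
    have heq : (((X, Y) : Matrix (Fin n) (Fin n) ℂ × Matrix (Fin n) (Fin n) ℂ) - ((X, φm X) : Matrix (Fin n) (Fin n) ℂ × Matrix (Fin n) (Fin n) ℂ))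
        = ((0 : Matrix (Fin n) (Fin n) ℂ), Y - φm X) := by
      rw [Prod.ext_iff]
      constructor
      · show X - X = 0; rw [sub_self]
      · rfl
    rw [heq] at hd
    exact sub_eq_zero.mp (hzero _ hd)
  have hφρ : ∀ g, φm (ρ g : Matrix (Fin n) (Fin n) ℂ) = σ g := by
    intro g
    exact (hφuniq _ _ (Submodule.subset_span ⟨g, rfl⟩)).symm
  have hφmul : ∀ X Y, φm (X * Y) = φm X * φm Y := by
    intro X Y
    have hm := hGmul _ (hφmem X) _ (hφmem Y)
    have hprod : ((X, φm X) * (Y, φm Y) : Matrix (Fin n) (Fin n) ℂ × Matrix (Fin n) (Fin n) ℂ) = (X * Y, φm X * φm Y) := rfl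
    rw [hprod] at hm
    exact (hφuniq _ _ hm).symm
  have hφone : φm (1 : Matrix (Fin n) (Fin n) ℂ) = 1 := by
    have h1 : ((1 : Matrix (Fin n) (Fin n) ℂ), (1 : Matrix (Fin n) (Fin n) ℂ)) ∈ G := by
      have := Submodule.subset_span (R := ℂ) (s := Set.range τ) ⟨(1 : Γ), rfl⟩
      have hτ1 : τ 1 = (1, 1) := by
        rw [hτ]; exact Prod.ext hcoe_one hσ_one
      rwa [hτ1] at this
    exact (hφuniq _ _ h1).symm
  -- matrix units
  set i0 : Fin n := ⟨0, hn⟩ with hi0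
  set E : Fin n → Fin n → Matrix (Fin n) (Fin n) ℂ :=
    fun i j => Matrix.single i j 1 with hE
  have hrep : ∀ X : Matrix (Fin n) (Fin n) ℂ, X = ∑ i, ∑ j, X i j • E i j := by
    intro X
    conv_lhs => rw [matrix_eq_sum_single X]
    refine Finset.sum_congr rfl fun i _ => Finset.sum_congr rfl fun j _ => ?_
    rw [hE, Matrix.smul_single, smul_eq_mul, mul_one]
  have hφsum : ∀ X : Matrix (Fin n) (Fin n) ℂ, φm X = ∑ i, ∑ j, X i j • φm (E i j) := by
    intro X
    conv_lhs => rw [hrep X]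
    rw [map_sum]
    refine Finset.sum_congr rfl fun i _ => ?_
    rw [map_sum]
    refine Finset.sum_congr rfl fun j _ => ?_
    rw [_root_.map_smul]
  have hφE : φm (E i0 i0) ≠ 0 := by
    intro h0
    have hEij : ∀ i j, φm (E i j) = 0 := by
      intro i j
      have hsplit : E i j = E i i0 * E i0 i0 * E i0 j := by
        rw [hE]
        simp
      rw [hsplit, hφmul, hφmul, h0, mul_zero, zero_mul]
    have h1 : (1 : Matrix (Fin n) (Fin n) ℂ) = 0 := by
      rw [← hφone, hφsum]
      simp [hEij]
    have := congrFun (congrFun h1 i0) i0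
    simpa using this
  obtain ⟨w, hw⟩ : ∃ w : Fin n → ℂ, (φm (E i0 i0)).mulVec w ≠ 0 := by
    by_contra hcon
    push_neg at hcon
    apply hφE
    ext i j
    have := congrFun (hcon (Pi.single j 1)) i
    rw [Matrix.mulVec_single] at this
    simpa using this
  set S : Matrix (Fin n) (Fin n) ℂ :=
    Matrix.of (fun i j => (φm (E j i0)).mulVec w i) with hS
  have hEcase : ∀ k l, S * E k l = φm (E k l) * S := by
    intro k l
    ext i j
    have hR : (φm (E k l) * S) i j = ((φm (E k l) * φm (E j i0)).mulVec w) i := by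
      rw [← Matrix.mulVec_mulVec]
      rw [Matrix.mul_apply]
      simp only [hS, Matrix.of_apply]
      rfl
    rw [hR, ← hφmul]
    by_cases hlj : l = j
    · subst hlj
      have h1 : E k l * E l i0 = E k i0 := by rw [hE]; simp
      rw [h1]
      have h2 : (S * E k l) i l = S i k := by
        rw [hE]
        simp [Matrix.mul_apply, Matrix.single, ite_and]
      rw [h2, hS]
      rfl
    · have h1 : E k l * E j i0 = 0 := by
        rw [hE]
        ext a b
        simp [Matrix.mul_apply, Matrix.single, ite_and, hlj]
      rw [h1]
      have h2 : (S * E k l) i j = 0 := by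
        rw [hE]
        simp [Matrix.mul_apply, Matrix.single, ite_and, fun h : l = j => hlj h]
      rw [h2]
      simp
  have hkey0 : ∀ X : Matrix (Fin n) (Fin n) ℂ, S * X = φm X * S := by
    intro X
    calc S * X = S * (∑ i, ∑ j, X i j • E i j) := by rw [← hrep X]
    _ = ∑ i, ∑ j, X i j • (S * E i j) := by
        rw [Finset.mul_sum]
        refine Finset.sum_congr rfl fun i _ => ?_
        rw [Finset.mul_sum]
        refine Finset.sum_congr rfl fun j _ => ?_
        rw [Matrix.mul_smul]
    _ = ∑ i, ∑ j, X i j • (φm (E i j) * S) := by simp_rw [hEcase]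
    _ = (∑ i, ∑ j, X i j • φm (E i j)) * S := by
        rw [Finset.sum_mul]
        refine Finset.sum_congr rfl fun i _ => ?_
        rw [Finset.sum_mul]
        refine Finset.sum_congr rfl fun j _ => ?_
        rw [Matrix.smul_mul]
    _ = φm X * S := by rw [← hφsum]
  have hSne : S ≠ 0 := by
    intro h
    apply hw
    ext i
    have := congrFun (congrFun h i) i0
    simpa [hS] using this
  have hSunit : IsUnit S := by
    have hWinv : ∀ g : Γ, ∀ x ∈ LinearMap.ker S.mulVecLin,
        (ρ g : Matrix (Fin n) (Fin n) ℂ).mulVec x ∈ LinearMap.ker S.mulVecLin := by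
      intro g x hx
      rw [LinearMap.mem_ker, Matrix.mulVecLin_apply] at hx ⊢
      rw [Matrix.mulVec_mulVec, hkey0 (ρ g : Matrix (Fin n) (Fin n) ℂ),
        ← Matrix.mulVec_mulVec, hx, Matrix.mulVec_zero]
    rcases hirr _ hWinv with h | h
    · rw [← Matrix.mulVec_injective_iff_isUnit]
      have : Function.Injective S.mulVecLin := by
        rw [← LinearMap.ker_eq_bot]; exact h
      exact this
    · exfalso
      apply hSne
      ext i j
      have hj : Pi.single j 1 ∈ LinearMap.ker S.mulVecLin := by rw [h]; trivial
      rw [LinearMap.mem_ker, Matrix.mulVecLin_apply] at hj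
      have := congrFun hj i
      rw [Matrix.mulVec_single] at this
      simpa using this
  have hkey : ∀ g : Γ, S * (ρ g : Matrix (Fin n) (Fin n) ℂ) = σ g * S := by
    intro g; rw [hkey0, hφρ]
  have hkeyH : ∀ g : Γ, Sᴴ * (ρ g : Matrix (Fin n) (Fin n) ℂ) = σ g * Sᴴ := by
    intro g
    have h1 := hkey g⁻¹
    have h2 : σ g⁻¹ = (ρ g : Matrix (Fin n) (Fin n) ℂ)ᴴ := by
      show (ρ g⁻¹⁻¹ : Matrix (Fin n) (Fin n) ℂ)ᴴ = _
      rw [inv_inv]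
    rw [h2] at h1
    have h3 := congrArg Matrix.conjTranspose h1
    rw [Matrix.conjTranspose_mul, Matrix.conjTranspose_mul,
      Matrix.conjTranspose_conjTranspose] at h3
    exact h3.symm
  have hSdet : IsUnit S.det := (Matrix.isUnit_iff_isUnit_det S).mp hSunit
  have hSl : S⁻¹ * S = 1 := Matrix.nonsing_inv_mul S hSdet
  have hSr : S * S⁻¹ = 1 := Matrix.mul_nonsing_inv S hSdet
  set C : Matrix (Fin n) (Fin n) ℂ := S⁻¹ * Sᴴ with hC
  have hcomm : ∀ g : Γ, (ρ g : Matrix (Fin n) (Fin n) ℂ) * C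
      = C * (ρ g : Matrix (Fin n) (Fin n) ℂ) := by
    intro g
    have hcancel : ∀ A B : Matrix (Fin n) (Fin n) ℂ, S * A = S * B → A = B := by
      intro A B hAB
      have := congrArg (fun X => S⁻¹ * X) hAB
      simpa [← Matrix.mul_assoc, hSl] using this
    apply hcancel
    have hL : S * ((ρ g : Matrix (Fin n) (Fin n) ℂ) * C) = σ g * Sᴴ := by
      rw [hC, ← mul_assoc, hkey g, mul_assoc, ← mul_assoc S, hSr, one_mul]
    have hR : S * (C * (ρ g : Matrix (Fin n) (Fin n) ℂ)) = σ g * Sᴴ := by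
      rw [hC, ← mul_assoc, ← mul_assoc, hSr, one_mul, hkeyH]
    rw [hL, hR]
  obtain ⟨c, hc⟩ : ∃ c : ℂ, C = c • 1 := by
    obtain ⟨c, hcv⟩ := Module.End.exists_eigenvalue (Matrix.mulVecLin C)
    obtain ⟨x0, hx0⟩ := hcv.exists_hasEigenvector
    refine ⟨c, ?_⟩
    set D := C - c • (1 : Matrix (Fin n) (Fin n) ℂ) with hD
    have hDcomm : ∀ g : Γ, (ρ g : Matrix (Fin n) (Fin n) ℂ) * D
        = D * (ρ g : Matrix (Fin n) (Fin n) ℂ) := by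
      intro g
      rw [hD, Matrix.mul_sub, Matrix.sub_mul, hcomm g]
      congr 1
      rw [Matrix.mul_smul, Matrix.smul_mul, Matrix.mul_one, Matrix.one_mul]
    have hWinv : ∀ g : Γ, ∀ x ∈ LinearMap.ker D.mulVecLin,
        (ρ g : Matrix (Fin n) (Fin n) ℂ).mulVec x ∈ LinearMap.ker D.mulVecLin := by
      intro g x hx
      rw [LinearMap.mem_ker, Matrix.mulVecLin_apply] at hx ⊢
      rw [Matrix.mulVec_mulVec, ← hDcomm g, ← Matrix.mulVec_mulVec, hx, Matrix.mulVec_zero]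
    rcases hirr _ hWinv with h | h
    · exfalso
      have hx0mem : x0 ∈ LinearMap.ker D.mulVecLin := by
        rw [LinearMap.mem_ker, Matrix.mulVecLin_apply, hD, Matrix.sub_mulVec]
        have hCx : C.mulVec x0 = c • x0 := by
          have := hx0.apply_eq_smul
          rwa [Matrix.mulVecLin_apply] at this
        rw [hCx, Matrix.smul_mulVec, Matrix.one_mulVec, sub_self]
      rw [h] at hx0mem
      exact hx0.2 (by simpa using hx0mem)
    · have hD0 : D = 0 := by
        ext i j
        have hj : Pi.single j 1 ∈ LinearMap.ker D.mulVecLin := by rw [h]; trivial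
        rw [LinearMap.mem_ker, Matrix.mulVecLin_apply] at hj
        have := congrFun hj i
        rw [Matrix.mulVec_single] at this
        simpa using this
      rw [hD] at hD0
      exact sub_eq_zero.mp hD0
  have hSH : Sᴴ = c • S := by
    have h1 : S * C = Sᴴ := by rw [hC, ← mul_assoc, hSr, one_mul]
    rw [← h1, hc, Matrix.mul_smul, Matrix.mul_one]
  have hcne : c ≠ 0 := by
    intro h
    rw [h, zero_smul] at hSH
    apply hSne
    have := congrArg Matrix.conjTranspose hSH
    rwa [Matrix.conjTranspose_conjTranspose, Matrix.conjTranspose_zero] at this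
  have hcc : (starRingEnd ℂ) c * c = 1 := by
    have h1 : S = (starRingEnd ℂ) c • Sᴴ := by
      have := congrArg Matrix.conjTranspose hSH
      rwa [Matrix.conjTranspose_smul, Matrix.conjTranspose_conjTranspose] at this
    rw [hSH, smul_smul] at h1
    by_contra hne
    have hz : ((starRingEnd ℂ) c * c - 1) • S = 0 := by
      rw [sub_smul, one_smul, ← h1, sub_self]
    rcases smul_eq_zero.mp hz with h | h
    · exact hne (sub_eq_zero.mp h)
    · exact hSne h
  obtain ⟨μ, hμ2⟩ := IsAlgClosed.exists_pow_nat_eq c (n := 2) (by norm_num)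
  have hμne : μ ≠ 0 := by
    intro h
    rw [h] at hμ2
    apply hcne
    rw [← hμ2]
    norm_num
  have hnormμ : (starRingEnd ℂ) μ * μ = 1 := by
    have h1 : ((starRingEnd ℂ) μ * μ) * ((starRingEnd ℂ) μ * μ) = 1 := by
      have : (starRingEnd ℂ) (μ^2) * μ^2 = 1 := by rw [hμ2]; exact hcc
      rw [map_pow] at this
      calc ((starRingEnd ℂ) μ * μ) * ((starRingEnd ℂ) μ * μ)
          = ((starRingEnd ℂ) μ)^2 * μ^2 := by ring
      _ = 1 := this
    have h2 : (starRingEnd ℂ) μ * μ = (Complex.normSq μ : ℂ) := by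
      rw [← Complex.normSq_eq_conj_mul_self]
    rw [h2] at h1 ⊢
    have h3 : (Complex.normSq μ) * (Complex.normSq μ) = 1 := by
      have := h1
      push_cast at this
      exact_mod_cast this
    have h4 : (0:ℝ) ≤ Complex.normSq μ := Complex.normSq_nonneg μ
    have h5 : Complex.normSq μ = 1 := by nlinarith
    rw [h5]
    norm_num
  have hμc : (starRingEnd ℂ) μ * c = μ := by
    have h1 : (starRingEnd ℂ) μ * c = ((starRingEnd ℂ) μ * μ) * μ := by rw [← hμ2]; ring
    rw [h1, hnormμ, one_mul]
  refine ⟨μ • S, ?_, ?_, ?_⟩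
  · show (μ • S)ᴴ = μ • S
    rw [Matrix.conjTranspose_smul, hSH, smul_smul, show star μ * c = μ from hμc]
  · rw [Matrix.isUnit_iff_isUnit_det, Matrix.det_smul]
    exact ((isUnit_iff_ne_zero.mpr hμne).pow _).mul hSdet
  · intro g
    have h1 : (μ • S) * (ρ g : Matrix (Fin n) (Fin n) ℂ) = σ g * (μ • S) := by
      rw [Matrix.smul_mul, hkey g, Matrix.mul_smul]
    have h2 : (ρ g : Matrix (Fin n) (Fin n) ℂ)ᴴ * σ g = 1 := by
      show (ρ g : Matrix (Fin n) (Fin n) ℂ)ᴴ * (ρ g⁻¹ : Matrix (Fin n) (Fin n) ℂ)ᴴ = 1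
      rw [← Matrix.conjTranspose_mul, ← hcoe_mul, inv_mul_cancel, hcoe_one,
        Matrix.conjTranspose_one]
    calc (ρ g : Matrix (Fin n) (Fin n) ℂ)ᴴ * (μ • S) * (ρ g : Matrix (Fin n) (Fin n) ℂ)
        = (ρ g : Matrix (Fin n) (Fin n) ℂ)ᴴ * ((μ • S) * (ρ g : Matrix (Fin n) (Fin n) ℂ)) := by
          rw [mul_assoc]
    _ = (ρ g : Matrix (Fin n) (Fin n) ℂ)ᴴ * (σ g * (μ • S)) := by rw [h1]
    _ = ((ρ g : Matrix (Fin n) (Fin n) ℂ)ᴴ * σ g) * (μ • S) := by rw [mul_assoc]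
    _ = μ • S := by rw [h2, one_mul]

set_option maxHeartbeats 1000000 in
lemma aux_sylvester {n : ℕ} (H : Matrix (Fin n) (Fin n) ℂ) (hH : H.IsHermitian)
    (hU : IsUnit H) :
    ∃ p q : ℕ, p + q = n ∧ ∃ P : Matrix (Fin n) (Fin n) ℂ, IsUnit P ∧
      Pᴴ * Ipq n p * P = H := by
  classical
  set d := hH.eigenvalues with hd
  have hdne : ∀ i, d i ≠ 0 := by
    intro i h0
    have hdet : IsUnit H.det := (Matrix.isUnit_iff_isUnit_det H).mp hU
    rw [hH.det_eq_prod_eigenvalues, isUnit_iff_ne_zero] at hdet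
    apply hdet
    refine Finset.prod_eq_zero (Finset.mem_univ i) ?_
    rw [← hd, h0]
    norm_num
  set s : Finset (Fin n) := Finset.univ.filter (fun i => 0 < d i) with hs
  set p := s.card with hp
  set q := sᶜ.card with hq
  have hpq : p + q = n := by
    rw [hp, hq, Finset.card_add_card_compl, Fintype.card_fin]
  let e2 : {x // x ∈ s} ≃ Fin p := s.equivFin
  let e2' : {x // ¬ x ∈ s} ≃ Fin q :=
    (Equiv.subtypeEquivRight (fun x => by simp [Finset.mem_compl])).trans sᶜ.equivFin
  let e : Fin n ≃ Fin n :=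
    ((Equiv.sumCompl (fun x : Fin n => x ∈ s)).symm.trans
      ((Equiv.sumCongr e2 e2').trans (finSumFinEquiv.trans (finCongr hpq))))
  have he : ∀ i : Fin n, ((e i : ℕ) < p ↔ 0 < d i) := by
    intro i
    by_cases hi : i ∈ s
    · have h1 : e i = finCongr hpq (finSumFinEquiv (Sum.inl (e2 ⟨i, hi⟩))) := by
        show finCongr hpq (finSumFinEquiv ((Equiv.sumCongr e2 e2')
          ((Equiv.sumCompl (fun x : Fin n => x ∈ s)).symm i))) = _
        rw [Equiv.sumCompl_symm_apply_of_pos hi]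
        rfl
      rw [h1]
      simp only [finSumFinEquiv_apply_left, finCongr_apply, Fin.coe_cast, Fin.coe_castAdd]
      constructor
      · intro _
        exact (Finset.mem_filter.mp hi).2
      · intro _
        exact (e2 ⟨i, hi⟩).isLt
    · have h1 : e i = finCongr hpq (finSumFinEquiv (Sum.inr (e2' ⟨i, hi⟩))) := by
        show finCongr hpq (finSumFinEquiv ((Equiv.sumCongr e2 e2')
          ((Equiv.sumCompl (fun x : Fin n => x ∈ s)).symm i))) = _
        rw [Equiv.sumCompl_symm_apply_of_neg hi]
        rfl
      rw [h1]
      simp only [finSumFinEquiv_apply_right, finCongr_apply, Fin.coe_cast, Fin.coe_natAdd]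
      constructor
      · intro h
        omega
      · intro h
        exact absurd (Finset.mem_filter.mpr ⟨Finset.mem_univ i, h⟩) hi
  set δ : Fin n → ℂ := fun j => if (j : ℕ) < p then 1 else -1 with hδ
  set ε : Fin n → ℂ := fun i => if 0 < d i then 1 else -1 with hε
  have hδε : ∀ i, δ (e i) = ε i := by
    intro i
    rw [hδ, hε]
    simp only
    rw [if_congr (he i) rfl rfl]
  set PM : Matrix (Fin n) (Fin n) ℂ := Matrix.of (fun i j => if e j = i then 1 else 0) with hPM
  have hPMentry : ∀ a b, PM a b = if e b = a then (1:ℂ) else 0 := fun a b => rfl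
  have hPMd : ∀ (v : Fin n → ℂ),
      PMᴴ * (Matrix.diagonal v) * PM = Matrix.diagonal (fun j => v (e j)) := by
    intro v
    ext a b
    have hmid : ∀ m, (PMᴴ * Matrix.diagonal v) a m = (if m = e a then v (e a) else 0) := by
      intro m
      rw [Matrix.mul_apply]
      rw [Finset.sum_eq_single (e a)]
      · rw [Matrix.conjTranspose_apply, hPMentry, if_pos rfl, Matrix.diagonal_apply]
        simp only [star_one, one_mul]
        by_cases hm : e a = m
        · rw [if_pos hm, if_pos hm.symm, hm]
        · rw [if_neg hm, if_neg (fun hc => hm hc.symm)]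
      · intro k _ hk
        rw [Matrix.conjTranspose_apply, hPMentry, if_neg (fun hc => hk hc.symm), star_zero,
          zero_mul]
      · intro h
        exact absurd (Finset.mem_univ _) h
    rw [Matrix.mul_apply]
    rw [Finset.sum_eq_single (e b)]
    · rw [hmid, hPMentry, if_pos rfl, mul_one, Matrix.diagonal_apply]
      by_cases hab : a = b
      · subst hab
        rw [if_pos rfl, if_pos rfl]
      · rw [if_neg (fun hc : e b = e a => hab (e.injective hc.symm)), if_neg hab]
    · intro m _ hm
      rw [hPMentry, if_neg (fun hc => hm hc.symm), mul_zero]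
    · intro h
      exact absurd (Finset.mem_univ _) h
  have hPMunit : IsUnit PM := by
    have h1 : PMᴴ * PM = 1 := by
      have h2 := hPMd (fun _ => 1)
      rw [Matrix.diagonal_one, Matrix.mul_one] at h2
      rw [h2]
    rw [Matrix.isUnit_iff_isUnit_det]
    have hdet := congrArg Matrix.det h1
    rw [Matrix.det_mul, Matrix.det_one] at hdet
    exact IsUnit.of_mul_eq_one _ (by rwa [mul_comm] at hdet)
  set wv : Fin n → ℂ := fun i => (Real.sqrt |d i| : ℂ) with hwv
  have hwv_ne : ∀ i, wv i ≠ 0 := by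
    intro i h
    rw [hwv] at h
    simp only [Complex.ofReal_eq_zero] at h
    have := Real.sqrt_eq_zero (abs_nonneg (d i)) |>.mp h
    exact hdne i (abs_eq_zero.mp this)
  set U := (hH.eigenvectorUnitary : Matrix (Fin n) (Fin n) ℂ) with hUdef
  set P : Matrix (Fin n) (Fin n) ℂ := PM * Matrix.diagonal wv * star U with hPdef
  have hDw_star : (Matrix.diagonal wv)ᴴ = Matrix.diagonal wv := by
    rw [Matrix.diagonal_conjTranspose]
    have hsw : star wv = wv := funext fun i => Complex.conj_ofReal _
    rw [hsw]
  refine ⟨p, q, hpq, P, ?_, ?_⟩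
  · have hDunit : IsUnit (Matrix.diagonal wv) := by
      rw [Matrix.isUnit_iff_isUnit_det, Matrix.det_diagonal, isUnit_iff_ne_zero]
      exact Finset.prod_ne_zero_iff.mpr (fun i _ => hwv_ne i)
    have hUunit : IsUnit (star U) := by
      have h1 : star U * U = 1 := Unitary.coe_star_mul_self hH.eigenvectorUnitary
      rw [Matrix.isUnit_iff_isUnit_det]
      have hdet := congrArg Matrix.det h1
      rw [Matrix.det_mul, Matrix.det_one] at hdet
      exact IsUnit.of_mul_eq_one _ hdet
    exact (hPMunit.mul hDunit).mul hUunit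
  · have step1 : PMᴴ * Matrix.diagonal δ * PM = Matrix.diagonal ε := by
      rw [hPMd δ]
      exact congrArg Matrix.diagonal (funext hδε)
    have step2 : Matrix.diagonal wv * Matrix.diagonal ε * Matrix.diagonal wv
        = Matrix.diagonal (fun i => (d i : ℂ)) := by
      rw [Matrix.diagonal_mul_diagonal, Matrix.diagonal_mul_diagonal]
      refine congrArg Matrix.diagonal (funext fun i => ?_)
      show (Real.sqrt |d i| : ℂ) * (if 0 < d i then (1:ℂ) else -1) * (Real.sqrt |d i| : ℂ)
          = (d i : ℂ)
      by_cases hdi : 0 < d i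
      · rw [if_pos hdi, mul_one, ← Complex.ofReal_mul,
          Real.mul_self_sqrt (abs_nonneg _), abs_of_pos hdi]
      · rw [if_neg hdi]
        have hd_neg : d i < 0 := lt_of_le_of_ne (not_lt.mp hdi) (hdne i)
        rw [mul_neg_one, neg_mul, ← Complex.ofReal_mul, Real.mul_self_sqrt (abs_nonneg _),
          ← Complex.ofReal_neg, abs_of_neg hd_neg, neg_neg]
    have hIpq : Ipq n p = Matrix.diagonal δ := rfl
    calc Pᴴ * Ipq n p * P
        = U * (Matrix.diagonal wv * (PMᴴ * Matrix.diagonal δ * PM) * Matrix.diagonal wv)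
          * star U := by
          rw [hIpq, hPdef, Matrix.conjTranspose_mul, Matrix.conjTranspose_mul, hDw_star,
            Matrix.star_eq_conjTranspose, Matrix.conjTranspose_conjTranspose]
          simp only [Matrix.mul_assoc]
    _ = U * Matrix.diagonal (fun i => (d i : ℂ)) * star U := by
          rw [step1, step2, Matrix.mul_assoc]
    _ = H := by
          have := hH.spectral_theorem
          rw [← hd] at this
          exact this.symm

/-- An irreducible representation whose character is fixed by `Φ₂` is conjugate to a
representation taking values in some `SU(p,q)`. -/
theorem irreducible_fixed_by_Phi2_conjugate_into_SUpq
    (n : ℕ) (hn : 0 < n) (Γ : Type*) [Group Γ]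
    (ρ : Γ →* Matrix.SpecialLinearGroup (Fin n) ℂ)
    (hirr : IsIrreducibleRep ρ)
    (htr : ∀ g : Γ, (ρ g : Matrix (Fin n) (Fin n) ℂ).trace =
      starRingEnd ℂ ((ρ g⁻¹ : Matrix.SpecialLinearGroup (Fin n) ℂ) :
        Matrix (Fin n) (Fin n) ℂ).trace) :
    ∃ (p q : ℕ), p + q = n ∧ ∃ Q : GL (Fin n) ℂ,
      ∀ g : Γ,
        ((Q : Matrix (Fin n) (Fin n) ℂ) * (ρ g : Matrix (Fin n) (Fin n) ℂ) *
            ((Q⁻¹ : GL (Fin n) ℂ) : Matrix (Fin n) (Fin n) ℂ))ᴴ * Ipq n p *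
          ((Q : Matrix (Fin n) (Fin n) ℂ) * (ρ g : Matrix (Fin n) (Fin n) ℂ) *
            ((Q⁻¹ : GL (Fin n) ℂ) : Matrix (Fin n) (Fin n) ℂ)) = Ipq n p := by
  obtain ⟨H, hHherm, hHunit, hHrel⟩ := aux_exists_H hn ρ hirr htr
  obtain ⟨p, q, hpq, P, hPunit, hPeq⟩ := aux_sylvester H hHherm hHunit
  refine ⟨p, q, hpq, hPunit.unit, ?_⟩
  intro g
  have hQ : ((hPunit.unit : GL (Fin n) ℂ) : Matrix (Fin n) (Fin n) ℂ) = P := hPunit.unit_spec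
  have hQinv : (((hPunit.unit : GL (Fin n) ℂ)⁻¹ : GL (Fin n) ℂ) : Matrix (Fin n) (Fin n) ℂ)
      = P⁻¹ := by
    rw [Matrix.coe_units_inv, hQ]
  rw [hQ, hQinv]
  set R : Matrix (Fin n) (Fin n) ℂ := (ρ g : Matrix (Fin n) (Fin n) ℂ) with hR
  have hPdet : IsUnit P.det := (Matrix.isUnit_iff_isUnit_det P).mp hPunit
  have hr : P * P⁻¹ = 1 := Matrix.mul_nonsing_inv P hPdet
  have hct : (P * R * P⁻¹)ᴴ = P⁻¹ᴴ * Rᴴ * Pᴴ := by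
    rw [Matrix.conjTranspose_mul, Matrix.conjTranspose_mul, Matrix.mul_assoc]
  calc (P * R * P⁻¹)ᴴ * Ipq n p * (P * R * P⁻¹)
      = P⁻¹ᴴ * (Rᴴ * (Pᴴ * Ipq n p * P * (R * P⁻¹))) := by
        rw [hct]
        simp only [Matrix.mul_assoc]
  _ = P⁻¹ᴴ * (Rᴴ * (H * (R * P⁻¹))) := by rw [hPeq]
  _ = P⁻¹ᴴ * (Rᴴ * H * R * P⁻¹) := by simp only [Matrix.mul_assoc]
  _ = P⁻¹ᴴ * (H * P⁻¹) := by rw [hHrel g]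
  _ = P⁻¹ᴴ * (Pᴴ * Ipq n p * P * P⁻¹) := by rw [hPeq]
  _ = (P⁻¹ᴴ * Pᴴ) * (Ipq n p * (P * P⁻¹)) := by simp only [Matrix.mul_assoc]
  _ = Ipq n p := by
      rw [← Matrix.conjTranspose_mul, hr, Matrix.conjTranspose_one, one_mul, Matrix.mul_one]
end

section
/- Let m be a positive integer and P ∈ SL_{2m}(ℂ) be such that conj(P) P = −Id. Then there exists Q ∈ GL_{2m}(ℂ) such that P = conj(Q) J_{2m} Q⁻¹. -/
open Matrix

/-- The `2m × 2m` block matrix `[[0, I_m], [-I_m, 0]]`, indexed by `Fin (2 * m)`. -/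
def Jmat (m : ℕ) : Matrix (Fin (2 * m)) (Fin (2 * m)) ℂ :=
  Matrix.of fun i j => if (i : ℕ) + m = (j : ℕ) then 1 else if (j : ℕ) + m = (i : ℕ) then -1 else 0

lemma Jmat_conj (m : ℕ) : (Jmat m).map (starRingEnd ℂ) = Jmat m := by
  ext i j
  simp only [Jmat, map_apply, of_apply]
  split_ifs <;> simp

lemma Jmat_sq (m : ℕ) : Jmat m * Jmat m = -1 := by
  ext i j
  rw [mul_apply]
  rcases lt_or_ge (i:ℕ) m with hi | hi
  · rw [Finset.sum_eq_single (⟨(i:ℕ)+m, by omega⟩ : Fin (2*m))]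
    · simp only [Jmat, of_apply, Matrix.neg_apply, one_apply, Fin.ext_iff]
      split_ifs <;> simp_all <;> omega
    · intro b _ hb
      rw [Fin.ne_iff_vne] at hb
      simp only [Jmat, of_apply]
      split_ifs <;> simp_all <;> omega
    · simp
  · rw [Finset.sum_eq_single (⟨(i:ℕ)-m, by omega⟩ : Fin (2*m))]
    · simp only [Jmat, of_apply, Matrix.neg_apply, one_apply, Fin.ext_iff]
      have : (j:ℕ) < 2*m := j.isLt
      split_ifs <;> simp_all <;> omega
    · intro b _ hb
      rw [Fin.ne_iff_vne] at hb
      have : (b:ℕ) < 2*m := b.isLt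
      simp only [Jmat, of_apply]
      split_ifs <;> simp_all <;> omega
    · simp

section helpers

variable {n : Type*} [Fintype n] [DecidableEq n]

lemma cmap_add (M N : Matrix n n ℂ) :
    (M + N).map (starRingEnd ℂ) = M.map (starRingEnd ℂ) + N.map (starRingEnd ℂ) := by
  ext i j; simp

lemma cmap_sub (M N : Matrix n n ℂ) :
    (M - N).map (starRingEnd ℂ) = M.map (starRingEnd ℂ) - N.map (starRingEnd ℂ) := by
  ext i j; simp

lemma cmap_smul (z : ℂ) (M : Matrix n n ℂ) :
    ((z • M)).map (starRingEnd ℂ) = (starRingEnd ℂ z) • M.map (starRingEnd ℂ) := by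
  ext i j; simp

lemma cmap_one : ((1 : Matrix n n ℂ)).map (starRingEnd ℂ) = 1 := by
  ext i j; simp only [map_apply, one_apply]; split_ifs <;> simp

lemma cmap_cmap (M : Matrix n n ℂ) :
    (M.map (starRingEnd ℂ)).map (starRingEnd ℂ) = M := by
  ext i j; simp

end helpers

/-- If `P ∈ SL_{2m}(ℂ)` satisfies `conj(P) P = -Id`, then `P = conj(Q) J_{2m} Q⁻¹` for some
`Q ∈ GL_{2m}(ℂ)`. -/
theorem exists_Q_of_conj_mul_self_eq_neg_one
    (m : ℕ) (hm : 0 < m) (P : Matrix (Fin (2 * m)) (Fin (2 * m)) ℂ) (hP : P.det = 1)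
    (h : P.map (starRingEnd ℂ) * P = -1) :
    ∃ Q : GL (Fin (2 * m)) ℂ,
      P = ((Q : Matrix (Fin (2 * m)) (Fin (2 * m)) ℂ).map (starRingEnd ℂ)) * Jmat m *
        ((Q⁻¹ : GL (Fin (2 * m)) ℂ) : Matrix (Fin (2 * m)) (Fin (2 * m)) ℂ) := by
  set c := starRingEnd ℂ with hc
  set J := Jmat m with hJ
  have hJc : J.map c = J := Jmat_conj m
  have hJJ : J * J = -1 := Jmat_sq m
  -- P * conj(P) = -1 as well
  have h' : P * P.map c = -1 := by
    have h2 : ((P.map c * P).map c) = ((-1 : Matrix (Fin (2*m)) (Fin (2*m)) ℂ)).map c :=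
      congrArg (fun M => Matrix.map M c) h
    rw [Matrix.map_mul, cmap_cmap] at h2
    rw [h2]; ext i j; simp only [map_apply, Matrix.neg_apply, one_apply]; split_ifs <;> simp
  -- the building blocks
  set C : Matrix (Fin (2*m)) (Fin (2*m)) ℂ := P.map c * J with hC
  set A : Matrix (Fin (2*m)) (Fin (2*m)) ℂ := 1 - C with hA
  set B : Matrix (Fin (2*m)) (Fin (2*m)) ℂ := Complex.I • (1 + C) with hB
  have hCc : C.map c = P * J := by rw [hC, Matrix.map_mul, cmap_cmap, hJc]
  have hDJ : (P * J) * J = -P := by rw [mul_assoc, hJJ, mul_neg_one]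
  have hPC : P * C = -J := by rw [hC, ← mul_assoc, h', neg_one_mul]
  -- the key identity for all real t
  have key : ∀ t : ℝ, ((A - (t:ℂ) • B).map c) * J = P * (A - (t:ℂ) • B) := by
    intro t
    have hmapQ : (A - (t:ℂ) • B).map c
        = (1 - P * J) + ((t:ℂ) * Complex.I) • (1 + P * J) := by
      rw [cmap_sub, cmap_smul, hA, hB, cmap_sub, cmap_smul, cmap_add, cmap_one, hCc]
      simp only [hc, Complex.conj_ofReal, Complex.conj_I, smul_neg, sub_neg_eq_add, smul_smul]
      module
    rw [hmapQ]
    have lhs : ((1 - P * J) + ((t:ℂ) * Complex.I) • (1 + P * J)) * J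
        = (J + P) + ((t:ℂ) * Complex.I) • (J - P) := by
      simp only [add_mul, sub_mul, smul_mul_assoc, one_mul, hDJ]
      module
    have rhs : P * (A - (t:ℂ) • B)
        = (J + P) + ((t:ℂ) * Complex.I) • (J - P) := by
      rw [hA, hB]
      simp only [mul_sub, mul_add, mul_one, mul_smul_comm, smul_smul, hPC]
      module
    rw [lhs, rhs]
  -- the determinant polynomial
  set p : Polynomial ℂ :=
    (A.map Polynomial.C - (Polynomial.X : Polynomial ℂ) • B.map Polynomial.C).det with hp
  have hev : ∀ z : ℂ, p.eval z = (A - z • B).det := by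
    intro z
    have := (Polynomial.evalRingHom z).map_det
      (A.map Polynomial.C - (Polynomial.X : Polynomial ℂ) • B.map Polynomial.C)
    rw [hp]
    refine this.trans ?_
    congr 1
    ext i j
    simp only [RingHom.mapMatrix_apply, Matrix.map_apply, Matrix.sub_apply, Matrix.smul_apply,
      Polynomial.coe_evalRingHom, Polynomial.eval_sub, Polynomial.eval_mul, Polynomial.eval_X,
      Polynomial.eval_C, Polynomial.eval_smul, smul_eq_mul]
  have hAB2 : A - Complex.I • B = (2:ℂ) • (1 : Matrix (Fin (2*m)) (Fin (2*m)) ℂ) := by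
    rw [hA, hB, smul_smul, Complex.I_mul_I, neg_smul, one_smul, sub_neg_eq_add]
    rw [two_smul]
    abel
  have hp0 : p ≠ 0 := by
    intro h0
    have := hev Complex.I
    rw [h0, hAB2] at this
    simp only [Polynomial.eval_zero, Matrix.det_smul, Matrix.det_one, mul_one] at this
    exact (pow_ne_zero (Fintype.card (Fin (2*m))) (two_ne_zero)) this.symm
  -- pick a real t avoiding the roots
  obtain ⟨t, ht⟩ : ∃ t : ℝ, ((t:ℂ)) ∉ p.roots := by
    by_contra hct
    push_neg at hct
    have hfin : ({z : ℂ | z ∈ p.roots}).Finite := p.roots.toFinset.finite_toSet.subset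
      (fun z hz => Multiset.mem_toFinset.mpr hz)
    have hsub : Set.range (fun t : ℝ => (t:ℂ)) ⊆ {z : ℂ | z ∈ p.roots} := by
      rintro _ ⟨t, rfl⟩; exact hct t
    exact ((Set.infinite_range_of_injective Complex.ofReal_injective).mono hsub) hfin
  have hQdet : (A - (t:ℂ) • B).det ≠ 0 := by
    intro h0
    exact ht ((Polynomial.mem_roots hp0).mpr (by rw [Polynomial.IsRoot, hev, h0]))
  set Q : Matrix (Fin (2*m)) (Fin (2*m)) ℂ := A - (t:ℂ) • B with hQdef
  have huQ : IsUnit Q := (Matrix.isUnit_iff_isUnit_det Q).mpr (isUnit_iff_ne_zero.mpr hQdet)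
  refine ⟨huQ.unit, ?_⟩
  have hval : ((huQ.unit : GL (Fin (2*m)) ℂ) : Matrix (Fin (2*m)) (Fin (2*m)) ℂ) = Q :=
    huQ.unit_spec
  have hinv : Q * ((huQ.unit⁻¹ : GL (Fin (2*m)) ℂ) : Matrix (Fin (2*m)) (Fin (2*m)) ℂ) = 1 :=
    huQ.mul_val_inv
  have hkey : Q.map c * J = P * Q := key t
  calc P = P * 1 := (mul_one P).symm
    _ = P * (Q * ((huQ.unit⁻¹ : GL (Fin (2*m)) ℂ) : Matrix (Fin (2*m)) (Fin (2*m)) ℂ)) := by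
        rw [hinv]
    _ = (P * Q) * _ := by rw [mul_assoc]
    _ = (Q.map c * J) * _ := by rw [hkey]
    _ = _ := by rw [hval, mul_assoc, ← mul_assoc, hJ]
end

section
/- For every triple (x, y, z) ∈ ℂ³ there exist matrices S, T ∈ SL_2(ℂ) with tr(S) = x, tr(T) = y and tr(ST) = z; that is, the map from pairs of SL_2(ℂ) matrices to ℂ³ given by the traces of S, T and ST is surjective. -/
open Matrix

/-- The surjectivity part of the Fricke–Klein–Vogt theorem: every triple of complex numbers
is realized as `(tr S, tr T, tr (ST))` for some `S, T ∈ SL_2(ℂ)`. -/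
theorem fricke_klein_vogt_surjective (x y z : ℂ) :
    ∃ S T : Matrix.SpecialLinearGroup (Fin 2) ℂ,
      (S : Matrix (Fin 2) (Fin 2) ℂ).trace = x ∧
      (T : Matrix (Fin 2) (Fin 2) ℂ).trace = y ∧
      ((S * T : Matrix.SpecialLinearGroup (Fin 2) ℂ) : Matrix (Fin 2) (Fin 2) ℂ).trace = z := by
  -- choose s with s^2 = (z - x*y)^2 - 4
  obtain ⟨s, hs⟩ : ∃ s : ℂ, s ^ 2 = (z - x * y) ^ 2 - 4 :=
    IsAlgClosed.exists_pow_nat_eq _ two_pos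
  set w : ℂ := z - x * y with hw
  set b : ℂ := (w + s) / 2 with hb
  set c : ℂ := -((w - s) / 2) with hc
  have hbc : -(b * c) = 1 := by
    simp only [hb, hc]
    field_simp
    ring_nf
    rw [hs]
    ring
  refine ⟨⟨!![x, -1; 1, 0], by simp [Matrix.det_fin_two_of]⟩,
    ⟨!![y, b; c, 0], by simpa [Matrix.det_fin_two_of] using hbc⟩, ?_, ?_, ?_⟩
  · simp [Matrix.trace_fin_two_of]
  · simp [Matrix.trace_fin_two_of]
  · show (((!![x, -1; 1, 0] : Matrix (Fin 2) (Fin 2) ℂ)) * !![y, b; c, 0]).trace = z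
    rw [show (!![x, -1; 1, 0] : Matrix (Fin 2) (Fin 2) ℂ) * !![y, b; c, 0]
        = !![x * y - c, x * b; y, b] from by
      ext i j; fin_cases i <;> fin_cases j <;>
        simp [Matrix.mul_apply, Fin.sum_univ_two] <;> try ring]
    simp only [Matrix.trace_fin_two_of, hc, hb, hw]
    ring
end
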